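/- Let n be a positive integer, λ an infinite cardinal, and τ a feebly compact shift-continuous T₁ topology on I_λ^n. Then for every α ∈ I_λ^n and every open neighbourhood U of α there exist finitely many α₁,…,α_k ∈ ↑α \ {α} such that every element of ↑α of rank exactly n lies in U ∪ ↑α₁ ∪ ⋯ ∪ ↑α_k. -/

import Mathlib

open Set Topology

universe v

namespace ISemi

/-- The set of partial injective transformations (partial bijections) of `ι`
with rank (cardinality of the range, equivalently of the domain) at most `n`. -/
def Elem (ι : Type*) (n : ℕ) : Type _ :=
  {f : ι ≃. ι // {a : ι | (f a).isSome}.encard ≤ (n : ℕ∞)}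

variable {ι : Type*} {n : ℕ}

/-- Composition of partial bijections (written multiplicatively). -/
instance : Semigroup (Elem ι n) where
  mul f g := ⟨f.1.trans g.1, by
    refine le_trans (Set.encard_mono ?_) f.2
    intro a ha
    simp only [Set.mem_setOf_eq] at *
    rcases Option.isSome_iff_exists.1 ha with ⟨c, hc⟩
    rcases (PEquiv.trans_eq_some _ _ _ _).1 hc with ⟨b, hb, -⟩
    simp [hb]⟩
  mul_assoc f g h := Subtype.ext (PEquiv.trans_assoc f.1 g.1 h.1)

/-- The inverse partial bijection. -/
def inv (f : Elem ι n) : Elem ι n := ⟨f.1.symm, by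
  have key : ∀ (g : ι ≃. ι), {b : ι | (g.symm b).isSome} ⊆
      (fun p : {a : ι | (g a).isSome} => (g p.1).get p.2) '' Set.univ := by
    intro g b hb
    rcases Option.isSome_iff_exists.1 hb with ⟨a, ha⟩
    have ha' : b ∈ g a := (PEquiv.mem_iff_mem g).1 (Option.mem_def.2 ha)
    simp only [Option.mem_def] at ha'
    refine ⟨⟨a, ?_⟩, Set.mem_univ _, ?_⟩
    · simp [Set.mem_setOf_eq, ha']
    · simp [ha']
  calc {b : ι | (f.1.symm b).isSome}.encard
      ≤ ((fun p : {a : ι | (f.1 a).isSome} => (f.1 p.1).get p.2) '' Set.univ).encard :=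
        Set.encard_mono (key f.1)
    _ ≤ (Set.univ : Set {a : ι | (f.1 a).isSome}).encard := Set.encard_image_le _ _
    _ = {a : ι | (f.1 a).isSome}.encard := by rw [Set.encard_univ, ENat.card_coe_set_eq]
    _ ≤ (n : ℕ∞) := f.2⟩

/-- The zero (the empty partial map). -/
def zero (ι : Type*) (n : ℕ) : Elem ι n := ⟨⊥, by simp [PEquiv.bot_apply]⟩

/-- idempotents -/
def IsIdem (e : Elem ι n) : Prop := e * e = e

/-- The natural partial order on the inverse semigroup `Elem ι n`:
`f ≼ g` iff `f = e * g` for some idempotent `e`. -/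
def nle (f g : Elem ι n) : Prop := ∃ e : Elem ι n, IsIdem e ∧ f = e * g

/-- up-set of `f` w.r.t. the natural partial order -/
def upset (f : Elem ι n) : Set (Elem ι n) := {g | nle f g}

/-- the rank of a partial bijection: the cardinality of its domain (= range) -/
noncomputable def rank (f : Elem ι n) : ℕ∞ := {a : ι | (f.1 a).isSome}.encard

def dom (f : Elem ι n) : Set ι := {a : ι | (f.1 a).isSome}

def ran (f : Elem ι n) : Set ι := {b : ι | (f.1.symm b).isSome}

/-- A topology on `Elem ι n` is shift-continuous if all left and right
translations are continuous. -/
def ShiftContinuous (ι : Type*) (n : ℕ) [TopologicalSpace (Elem ι n)] : Prop :=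
  ∀ a : Elem ι n, Continuous (fun x : Elem ι n => a * x) ∧
    Continuous (fun x : Elem ι n => x * a)

/-- A space is feebly compact if every locally finite family of nonempty open
sets is finite. -/
def FeeblyCompact (X : Type*) [TopologicalSpace X] : Prop :=
  ∀ 𝒰 : Set (Set X), (∀ U ∈ 𝒰, IsOpen U ∧ U.Nonempty) →
    LocallyFinite (fun U : 𝒰 => (U : Set X)) → 𝒰.Finite

/-- A space is `d`-feebly compact if every discrete family of open sets is
finite; a family is discrete if every point has a neighbourhood meeting at
most one member of the family. -/
def DFeeblyCompact (X : Type*) [TopologicalSpace X] : Prop :=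
  ∀ 𝒰 : Set (Set X), (∀ U ∈ 𝒰, IsOpen U) →
    (∀ x : X, ∃ V ∈ 𝓝 x, {U ∈ 𝒰 | (U ∩ V).Nonempty}.Subsingleton) → 𝒰.Finite

/-- countably pracompact: there is a dense set `A` such that every infinite
subset of `A` has an accumulation point in `X`. -/
def CountablyPracompact (X : Type*) [TopologicalSpace X] : Prop :=
  ∃ A : Set X, Dense A ∧ ∀ B ⊆ A, B.Infinite → ∃ x : X, AccPt x (Filter.principal B)

/-- H-closed: closed in every Hausdorff space in which it embeds. -/
def HClosed (X : Type*) [TopologicalSpace X] : Prop :=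
  ∀ (Y : Type v) (_ : TopologicalSpace Y), T2Space Y →
    ∀ e : X → Y, IsEmbedding e → IsClosed (Set.range e)

/-- infra H-closed: every continuous image in a first-countable Hausdorff
space is closed. -/
def InfraHClosed (X : Type*) [TopologicalSpace X] : Prop :=
  ∀ (Y : Type v) (_ : TopologicalSpace Y), T2Space Y →
    FirstCountableTopology Y → ∀ f : X → Y, Continuous f → IsClosed (Set.range f)

/-- `Y`-compactness: every continuous image in `Y` is compact. -/
def YCompact (X : Type*) [TopologicalSpace X] (Y : Type*) [TopologicalSpace Y] : Prop :=
  ∀ f : X → Y, Continuous f → IsCompact (Set.range f)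

/-- scattered: every nonempty subset has a point isolated in it. -/
def Scattered (X : Type*) [TopologicalSpace X] : Prop :=
  ∀ S : Set X, S.Nonempty → ∃ x ∈ S, ∃ U : Set X, IsOpen U ∧ U ∩ S = {x}

/-- semiregular: there is a base consisting of regular open sets. -/
def Semiregular (X : Type*) [TopologicalSpace X] : Prop :=
  ∃ B : Set (Set X), TopologicalSpace.IsTopologicalBasis B ∧
    ∀ U ∈ B, interior (closure U) = U

/-- countably compact: every countable open cover has a finite subcover. -/
def CountablyCompact (X : Type*) [TopologicalSpace X] : Prop :=
  ∀ 𝒰 : Set (Set X), 𝒰.Countable → (∀ U ∈ 𝒰, IsOpen U) → ⋃₀ 𝒰 = Set.univ →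
    ∃ 𝒱 ⊆ 𝒰, 𝒱.Finite ∧ ⋃₀ 𝒱 = Set.univ

end ISemi

/-! ### Auxiliary lemmas -/

namespace ISemi

variable {ι : Type*} {n : ℕ}

lemma mul_coe (f g : Elem ι n) : (f * g).1 = f.1.trans g.1 := rfl

lemma mul_apply (f g : Elem ι n) (x : ι) : (f * g).1 x = (f.1 x).bind g.1 := rfl

lemma dom_finite (f : Elem ι n) : (dom f).Finite := by
  refine Set.encard_lt_top_iff.1 (lt_of_le_of_lt f.2 ?_)
  exact lt_top_iff_ne_top.2 (by simp)

lemma isIdem_apply {e : Elem ι n} (he : IsIdem e) {x y : ι} (h : y ∈ e.1 x) : y = x := by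
  have h2 : y ∈ (e.1.trans e.1) x := by
    have h3 : (e * e).1 = e.1 := congrArg Subtype.val he
    rw [mul_coe] at h3
    rw [h3]; exact h
  rcases (PEquiv.mem_trans _ _ _ _).1 h2 with ⟨c, hc1, hc2⟩
  have hcy : y = c := Option.mem_unique h hc1
  subst hcy
  exact PEquiv.inj e.1 hc2 h

lemma nle_mem {f g : Elem ι n} (h : nle f g) {x y : ι} (hxy : y ∈ f.1 x) : y ∈ g.1 x := by
  obtain ⟨e, he, hf⟩ := h
  rw [hf, mul_coe] at hxy
  rcases (PEquiv.mem_trans _ _ _ _).1 hxy with ⟨c, hc1, hc2⟩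
  rwa [isIdem_apply he hc1] at hc2

/-- the partial identity on the domain of `f` -/
def idOf (f : Elem ι n) : Elem ι n := f * inv f

lemma idOf_apply_some {f : Elem ι n} {x y : ι} (h : f.1 x = some y) :
    (idOf f).1 x = some x := by
  show (f.1.trans f.1.symm) x = some x
  exact (PEquiv.trans_eq_some _ _ _ _).2 ⟨y, h, (PEquiv.eq_some_iff f.1).2 h⟩

lemma idOf_apply_none {f : Elem ι n} {x : ι} (h : f.1 x = none) :
    (idOf f).1 x = none := by
  show (f.1 x).bind f.1.symm = none
  rw [h]; rfl

lemma isIdem_idOf (f : Elem ι n) : IsIdem (idOf f) := by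
  refine Subtype.ext (PEquiv.ext fun x => ?_)
  show ((idOf f).1 x).bind (idOf f).1 = (idOf f).1 x
  cases hfx : f.1 x with
  | none => rw [idOf_apply_none hfx]; rfl
  | some y =>
    have h1 := idOf_apply_some (f := f) hfx
    rw [h1]
    simpa using h1

lemma idOf_mul {f g : Elem ι n} (h : ∀ x y, y ∈ f.1 x → y ∈ g.1 x) : idOf f * g = f := by
  refine Subtype.ext (PEquiv.ext fun x => ?_)
  show ((idOf f).1 x).bind g.1 = f.1 x
  cases hfx : f.1 x with
  | none => rw [idOf_apply_none hfx]; rfl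
  | some y =>
    rw [idOf_apply_some hfx]
    simpa using h x y hfx

lemma nle_refl (f : Elem ι n) : nle f f :=
  ⟨idOf f, isIdem_idOf f, (idOf_mul fun _ _ h => h).symm⟩

lemma nle_iff_idOf {f g : Elem ι n} : nle f g ↔ idOf f * g = f := by
  constructor
  · intro h
    exact idOf_mul fun x y hxy => nle_mem h hxy
  · intro h
    exact ⟨idOf f, isIdem_idOf f, h.symm⟩

lemma mem_dom_iff {f : Elem ι n} {x : ι} : x ∈ dom f ↔ ∃ y, f.1 x = some y := by
  simp [dom, Option.isSome_iff_exists]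

lemma not_mem_dom_iff {f : Elem ι n} {x : ι} : x ∉ dom f ↔ f.1 x = none := by
  simp [dom, Option.isSome_iff_exists]
  cases f.1 x <;> simp

lemma nle_dom_subset {f g : Elem ι n} (h : nle f g) : dom f ⊆ dom g := by
  intro x hx
  obtain ⟨y, hy⟩ := mem_dom_iff.1 hx
  exact mem_dom_iff.2 ⟨y, nle_mem h hy⟩

lemma elem_ext {f g : Elem ι n} (hd : dom f = dom g)
    (h : ∀ x y, y ∈ f.1 x → y ∈ g.1 x) : f = g := by
  refine Subtype.ext (PEquiv.ext fun x => ?_)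
  cases hfx : f.1 x with
  | none =>
    have hx : x ∉ dom f := not_mem_dom_iff.2 hfx
    rw [hd] at hx
    exact (not_mem_dom_iff.1 hx).symm
  | some y => exact (h x y hfx).symm

lemma restrictions_finite (β : Elem ι n) : {γ : Elem ι n | nle γ β}.Finite := by
  apply Set.Finite.of_finite_image (f := dom)
  · refine Set.Finite.subset (Set.Finite.finite_subsets (dom_finite β)) ?_
    rintro s ⟨γ, hγ, rfl⟩
    exact nle_dom_subset hγ
  · intro γ1 h1 γ2 h2 hd
    refine elem_ext hd fun x y hxy => ?_
    have hxd : x ∈ dom γ2 := hd ▸ mem_dom_iff.2 ⟨y, hxy⟩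
    obtain ⟨z, hz⟩ := mem_dom_iff.1 hxd
    have hy : y ∈ β.1 x := nle_mem h1 hxy
    have hzβ : z ∈ β.1 x := nle_mem h2 hz
    have : z = y := Option.mem_unique hzβ hy
    rw [hz, this]
    rfl

lemma rank_eq_encard_dom (f : Elem ι n) : rank f = (dom f).encard := rfl

lemma upset_of_rank_eq {β : Elem ι n} (h : rank β = (n : ℕ∞)) : upset β = {β} := by
  ext g
  simp only [upset, Set.mem_setOf_eq, Set.mem_singleton_iff]
  constructor
  · intro hg
    have hsub : dom β ⊆ dom g := nle_dom_subset hg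
    have hdg : (dom g).encard ≤ (dom β).encard := le_trans g.2 h.symm.le
    have hde : dom β = dom g :=
      Set.Finite.eq_of_subset_of_encard_le (dom_finite β) hsub hdg
    exact (elem_ext hde fun x y hxy => nle_mem hg hxy).symm
  · rintro rfl
    exact nle_refl _

/-- the partial identity on the range of `f` -/
def coIdOf (f : Elem ι n) : Elem ι n := inv f * f

lemma coIdOf_apply_some {f : Elem ι n} {x y : ι} (h : f.1 x = some y) :
    (coIdOf f).1 y = some y := by
  show (f.1.symm.trans f.1) y = some y
  exact (PEquiv.trans_eq_some _ _ _ _).2 ⟨x, (PEquiv.eq_some_iff f.1).2 h, h⟩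

lemma coIdOf_apply_eq {f : Elem ι n} {y z : ι} (h : (coIdOf f).1 y = some z) :
    z = y ∧ ∃ x, f.1 x = some y := by
  have h' : z ∈ (f.1.symm.trans f.1) y := h
  rcases (PEquiv.mem_trans _ _ _ _).1 h' with ⟨c, hc1, hc2⟩
  have hcy : f.1 c = some y := (PEquiv.eq_some_iff f.1).1 hc1
  have hcz : f.1 c = some z := hc2
  have hzy : z = y := Option.some_inj.1 (hcz.symm.trans hcy)
  exact ⟨hzy, c, hcy⟩

lemma mul_coIdOf (β : Elem ι n) : β * coIdOf β = β := by
  refine Subtype.ext (PEquiv.ext fun x => ?_)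
  show (β.1 x).bind (coIdOf β).1 = β.1 x
  cases hx : β.1 x with
  | none => rfl
  | some y => simpa using coIdOf_apply_some hx

lemma ran_finite (β : Elem ι n) : (ran β).Finite := dom_finite (inv β)

lemma dom_of_idOf_some {f : Elem ι n} {x c : ι} (h : (idOf f).1 x = some c) :
    x ∈ dom f ∧ c = x := by
  cases hfx : f.1 x with
  | none => rw [idOf_apply_none hfx] at h; cases h
  | some y =>
    rw [idOf_apply_some hfx] at h
    exact ⟨mem_dom_iff.2 ⟨y, hfx⟩, (Option.some_inj.1 h).symm⟩

lemma range_phi_finite (β : Elem ι n) :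
    (Set.range (fun x : Elem ι n => idOf β * x * coIdOf β)).Finite := by
  classical
  set Q : Set (Elem ι n) := {g | ∀ x y, g.1 x = some y → x ∈ dom β ∧ y ∈ ran β} with hQ
  have hsub : Set.range (fun x : Elem ι n => idOf β * x * coIdOf β) ⊆ Q := by
    rintro _ ⟨g, rfl⟩ x y hxy
    have hxy' : ((((idOf β).1 x).bind g.1).bind (coIdOf β).1) = some y := hxy
    rcases Option.bind_eq_some_iff.1 hxy' with ⟨w, hw1, hw2⟩
    rcases Option.bind_eq_some_iff.1 hw1 with ⟨c, hc1, hc2⟩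
    obtain ⟨hxd, -⟩ := dom_of_idOf_some hc1
    obtain ⟨-, x', hx'⟩ := coIdOf_apply_eq hw2
    have hwr : w ∈ ran β := by
      have : β.1.symm w = some x' := (PEquiv.eq_some_iff β.1).2 hx'
      simp [ran, this]
    obtain ⟨hyx, -⟩ := coIdOf_apply_eq hw2
    exact ⟨hxd, hyx ▸ hwr⟩
  refine Set.Finite.subset ?_ hsub
  apply Set.Finite.of_finite_image (f := fun g : Elem ι n => {p : ι × ι | g.1 p.1 = some p.2})
  · refine Set.Finite.subset (Set.Finite.finite_subsets ((dom_finite β).prod (ran_finite β))) ?_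
    rintro s ⟨g, hg, rfl⟩
    rintro ⟨x, y⟩ hxy
    exact Set.mem_prod.2 (hg x y hxy)
  · intro g1 h1 g2 h2 hgr
    have hgr' : {p : ι × ι | g1.1 p.1 = some p.2} = {p : ι × ι | g2.1 p.1 = some p.2} := hgr
    refine Subtype.ext (PEquiv.ext fun x => ?_)
    cases hx1 : g1.1 x with
    | some y =>
      have hmem : (x, y) ∈ {p : ι × ι | g1.1 p.1 = some p.2} := hx1
      rw [hgr'] at hmem
      exact hmem.symm
    | none =>
      cases hx2 : g2.1 x with
      | none => rfl
      | some y =>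
        have hmem : (x, y) ∈ {p : ι × ι | g2.1 p.1 = some p.2} := hx2
        rw [← hgr'] at hmem
        have hc : g1.1 x = some y := hmem
        rw [hx1] at hc
        exact hc

lemma upset_eq_preimage (β : Elem ι n) :
    upset β = (fun x : Elem ι n => idOf β * x * coIdOf β) ⁻¹' {β} := by
  ext g
  simp only [upset, Set.mem_setOf_eq, Set.mem_preimage, Set.mem_singleton_iff]
  constructor
  · intro h
    have h1 : idOf β * g = β := nle_iff_idOf.1 h
    show idOf β * g * coIdOf β = β
    rw [h1, mul_coIdOf]
  · intro h
    refine nle_iff_idOf.2 ?_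
    refine Subtype.ext (PEquiv.ext fun x => ?_)
    show ((idOf β).1 x).bind g.1 = β.1 x
    cases hx : β.1 x with
    | none => rw [idOf_apply_none hx]; rfl
    | some y =>
      have hφ : (((idOf β).1 x).bind g.1).bind (coIdOf β).1 = some y := by
        have h' := congrArg (fun t : Elem ι n => t.1 x) h
        replace h' : (idOf β * g * coIdOf β).1 x = β.1 x := h'
        rw [show (idOf β * g * coIdOf β).1 x =
          (((idOf β).1 x).bind g.1).bind (coIdOf β).1 from rfl] at h'
        rw [h', hx]
      rw [idOf_apply_some hx] at hφ ⊢
      rw [Option.bind_some] at hφ ⊢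
      rcases Option.bind_eq_some_iff.1 hφ with ⟨w, hw1, hw2⟩
      obtain ⟨hyw, -⟩ := coIdOf_apply_eq hw2
      rw [hw1, hyw]

lemma isOpen_upset [TopologicalSpace (Elem ι n)] [T1Space (Elem ι n)]
    (hshift : ShiftContinuous ι n) (β : Elem ι n) : IsOpen (upset β) := by
  have hc : Continuous (fun x : Elem ι n => idOf β * x * coIdOf β) :=
    (hshift (coIdOf β)).2.comp (hshift (idOf β)).1
  have hfin := range_phi_finite β
  rw [upset_eq_preimage, ← isClosed_compl_iff]
  have heq : ((fun x : Elem ι n => idOf β * x * coIdOf β) ⁻¹' {β})ᶜ =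
      ⋃ p ∈ (Set.range (fun x : Elem ι n => idOf β * x * coIdOf β) \ {β}),
        (fun x : Elem ι n => idOf β * x * coIdOf β) ⁻¹' {p} := by
    ext x
    simp only [Set.mem_compl_iff, Set.mem_preimage, Set.mem_singleton_iff, Set.mem_iUnion,
      Set.mem_diff, Set.mem_range, exists_prop]
    constructor
    · intro hne
      exact ⟨_, ⟨⟨x, rfl⟩, hne⟩, rfl⟩
    · rintro ⟨p, ⟨-, hne⟩, hp⟩
      rw [hp]; exact hne
  rw [heq]
  exact Set.Finite.isClosed_biUnion (hfin.diff)
    (fun p _ => isClosed_singleton.preimage hc)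

end ISemi

theorem stmt18 (ι : Type*) [Infinite ι] (n : ℕ) (hn : 0 < n)
    [TopologicalSpace (ISemi.Elem ι n)] [T1Space (ISemi.Elem ι n)]
    (hshift : ISemi.ShiftContinuous ι n)
    (hfc : ISemi.FeeblyCompact (ISemi.Elem ι n))
    (a : ISemi.Elem ι n) (U : Set (ISemi.Elem ι n)) (haU : a ∈ U) (hU : IsOpen U) :
    ∃ F : Finset (ISemi.Elem ι n), ↑F ⊆ ISemi.upset a \ {a} ∧
      ∀ g ∈ ISemi.upset a, ISemi.rank g = (n : ℕ∞) →
        g ∈ U ∪ ⋃ b ∈ F, ISemi.upset b := by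
  classical
  by_cases hr : ISemi.rank a = (n : ℕ∞)
  · refine ⟨∅, by simp, fun g hg _ => ?_⟩
    rw [ISemi.upset_of_rank_eq hr, Set.mem_singleton_iff] at hg
    exact Or.inl (hg ▸ haU)
  -- main case: rank a < n
  by_contra hcon
  push_neg at hcon
  -- for every finite set T of already-chosen elements, choose a new counterexample
  have key : ∀ T : Finset (ISemi.Elem ι n), ∃ g, ISemi.nle a g ∧
      ISemi.rank g = (n : ℕ∞) ∧ g ∉ U ∧
      ∀ γ, ISemi.nle a γ → γ ≠ a → (∃ b ∈ T, ISemi.nle γ b) → ¬ ISemi.nle γ g := by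
    intro T
    have hD : ({γ : ISemi.Elem ι n |
        (ISemi.nle a γ ∧ γ ≠ a) ∧ ∃ b ∈ T, ISemi.nle γ b}).Finite := by
      refine Set.Finite.subset (Set.Finite.biUnion T.finite_toSet
        (fun b _ => ISemi.restrictions_finite b)) ?_
      rintro γ ⟨-, b, hb, hγb⟩
      exact Set.mem_biUnion hb hγb
    obtain ⟨g, hg1, hg2⟩ := hcon hD.toFinset (by
      intro γ hγ
      rw [Finset.mem_coe, Set.Finite.mem_toFinset] at hγ
      exact ⟨hγ.1.1, hγ.1.2⟩)
    obtain ⟨hgrank, hgnot⟩ := hg2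
    simp only [Set.mem_union, Set.mem_iUnion, exists_prop, not_or, not_exists, not_and] at hgnot
    refine ⟨g, hg1, hgrank, hgnot.1, fun γ hγ1 hγ2 hγ3 hγ4 => ?_⟩
    exact hgnot.2 γ (Set.Finite.mem_toFinset hD |>.2 ⟨⟨hγ1, hγ2⟩, hγ3⟩) hγ4
  choose nxt h1 h2 h3 h4 using key
  -- build the sequence
  let T : ℕ → Finset (ISemi.Elem ι n) := fun i =>
    Nat.rec ∅ (fun _ Tk => insert (nxt Tk) Tk) i
  let β : ℕ → ISemi.Elem ι n := fun i => nxt (T i)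
  have hTsucc : ∀ i, T (i + 1) = insert (β i) (T i) := fun _ => rfl
  have hTmono : ∀ {i j : ℕ}, i ≤ j → T i ⊆ T j := by
    intro i j h
    induction h with
    | refl => exact Finset.Subset.refl _
    | step _ ih => exact ih.trans (by rw [hTsucc]; exact Finset.subset_insert _ _)
  have hβmem : ∀ {i j : ℕ}, i < j → β i ∈ T j := by
    intro i j h
    apply hTmono h
    rw [hTsucc]
    exact Finset.mem_insert_self _ _
  have hβa : ∀ i, ISemi.nle a (β i) := fun i => h1 (T i)
  have hβrank : ∀ i, ISemi.rank (β i) = (n : ℕ∞) := fun i => h2 (T i)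
  have hβU : ∀ i, β i ∉ U := fun i => h3 (T i)
  have hblock : ∀ γ, ISemi.nle a γ → γ ≠ a →
      ∀ i j, i < j → ISemi.nle γ (β i) → ¬ ISemi.nle γ (β j) :=
    fun γ hγ1 hγ2 i j hij hle => h4 (T j) γ hγ1 hγ2 ⟨β i, hβmem hij, hle⟩
  have hβne_a : ∀ i, β i ≠ a := by
    intro i h
    exact hr (h ▸ hβrank i)
  have hβinj : Function.Injective β := by
    intro i j hij
    by_contra hne
    rcases lt_or_gt_of_ne hne with h | h
    · exact hblock (β i) (hβa i) (hβne_a i) i j h (ISemi.nle_refl _)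
        (hij ▸ ISemi.nle_refl (β i))
    · exact hblock (β j) (hβa j) (hβne_a j) j i h (ISemi.nle_refl _)
        (hij ▸ ISemi.nle_refl (β j))
  -- the family of open singletons
  set 𝒰 : Set (Set (ISemi.Elem ι n)) := Set.range (fun i => ({β i} : Set (ISemi.Elem ι n)))
    with h𝒰
  have hopen : ∀ V ∈ 𝒰, IsOpen V ∧ V.Nonempty := by
    rintro _ ⟨i, rfl⟩
    refine ⟨?_, Set.singleton_nonempty _⟩
    show IsOpen ({β i} : Set (ISemi.Elem ι n))
    rw [← ISemi.upset_of_rank_eq (hβrank i)]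
    exact ISemi.isOpen_upset hshift (β i)
  have hinf : 𝒰.Infinite :=
    Set.infinite_range_of_injective (Set.singleton_injective.comp hβinj)
  have hnl : ¬ LocallyFinite (fun V : 𝒰 => (V : Set (ISemi.Elem ι n))) :=
    fun h => hinf (hfc 𝒰 hopen h)
  simp only [LocallyFinite] at hnl
  push_neg at hnl
  obtain ⟨x, hx⟩ := hnl
  -- transfer to indices
  have hidxinf : ∀ t ∈ 𝓝 x, {i : ℕ | β i ∈ t}.Infinite := by
    intro t ht
    by_contra hinf'
    rw [Set.not_infinite] at hinf'
    apply hx t ht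
    have hfin := hinf'
    refine Set.Finite.subset (hfin.image
      (fun i => (⟨{β i}, Set.mem_range_self i⟩ : 𝒰))) ?_
    rintro ⟨u, i, rfl⟩ hu
    obtain ⟨z, hz1, hz2⟩ := hu
    rw [Set.mem_singleton_iff] at hz1
    subst hz1
    exact ⟨i, hz2, rfl⟩
  -- x is above a
  have hxa : ISemi.nle a x := by
    have hma : ∀ i, ISemi.idOf a * β i = a :=
      fun i => ISemi.nle_iff_idOf.1 (hβa i)
    have hmx : ISemi.idOf a * x = a := by
      by_contra hne
      have hV : (fun y => ISemi.idOf a * y) ⁻¹' {a}ᶜ ∈ 𝓝 x := by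
        refine IsOpen.mem_nhds (isOpen_compl_singleton.preimage (hshift (ISemi.idOf a)).1) ?_
        exact hne
      obtain ⟨i, hi⟩ := (hidxinf _ hV).nonempty
      exact (hi : ISemi.idOf a * β i ∈ ({a}ᶜ : Set _)) (hma i)
    exact ⟨ISemi.idOf a, ISemi.isIdem_idOf a, hmx.symm⟩
  -- x is not a
  have hxne : x ≠ a := by
    rintro rfl
    obtain ⟨i, hi⟩ := (hidxinf U (hU.mem_nhds haU)).nonempty
    exact hβU i hi
  -- upset x is an open neighbourhood of x catching two distinct β's
  have hup : ISemi.upset x ∈ 𝓝 x :=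
    (ISemi.isOpen_upset hshift x).mem_nhds (ISemi.nle_refl x)
  obtain ⟨i, hi, j, hj, hne⟩ := (hidxinf _ hup).nontrivial
  have hxi : ISemi.nle x (β i) := hi
  have hxj : ISemi.nle x (β j) := hj
  rcases lt_or_gt_of_ne hne with h | h
  · exact hblock x hxa hxne i j h hxi hxj
  · exact hblock x hxa hxne j i h hxj hxi
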